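/- Let D = U Λ Vᵀ be a compact SVD of D ∈ ℝ^{m×p}, ν > 0, A = ν X*X + DᵀD with X* = Xᵀ/n, and B := Λ² + ν Vᵀ X*(I − U₁U₁ᵀ)XV where U₁ comes from the compact SVD of XṼ/√n as above. Then D A⁺ Dᵀ = U Λ B^{-1} Λ Uᵀ, and hence Σ := (I − D A⁺ Dᵀ)/ν = (I − U Λ B^{-1} Λ Uᵀ)/ν. -/

import Mathlib

open Matrix

/-- `Mplus` is the Moore–Penrose pseudoinverse of `M`. -/
def IsMoorePenrose {a b : Type*} [Fintype a] [Fintype b]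
    (M : Matrix a b ℝ) (Mplus : Matrix b a ℝ) : Prop :=
  M * Mplus * M = M ∧ Mplus * M * Mplus = Mplus ∧
    (M * Mplus)ᵀ = M * Mplus ∧ (Mplus * M)ᵀ = Mplus * M

lemma mp_unique {a b : Type*} [Fintype a] [Fintype b] {M : Matrix a b ℝ}
    {N₁ N₂ : Matrix b a ℝ} (h1 : IsMoorePenrose M N₁) (h2 : IsMoorePenrose M N₂) :
    N₁ = N₂ := by
  obtain ⟨m1, r1, s1, t1⟩ := h1
  obtain ⟨m2, r2, s2, t2⟩ := h2
  have e1 : M * N₁ = M * N₂ := by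
    calc M * N₁ = (M * N₂ * M) * N₁ := by rw [m2]
    _ = (M * N₂) * (M * N₁) := by rw [Matrix.mul_assoc]
    _ = (M * N₂)ᵀ * (M * N₁)ᵀ := by rw [s2, s1]
    _ = ((M * N₁) * (M * N₂))ᵀ := (transpose_mul _ _).symm
    _ = (M * (N₁ * M * N₂))ᵀ := by simp only [Matrix.mul_assoc]
    _ = ((M * N₁ * M) * N₂)ᵀ := by simp only [Matrix.mul_assoc]
    _ = (M * N₂)ᵀ := by rw [m1]
    _ = M * N₂ := s2
  have e2 : N₁ * M = N₂ * M := by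
    calc N₁ * M = N₁ * (M * N₂ * M) := by rw [m2]
    _ = (N₁ * M) * (N₂ * M) := by simp only [Matrix.mul_assoc]
    _ = (N₁ * M)ᵀ * (N₂ * M)ᵀ := by rw [t1, t2]
    _ = ((N₂ * M) * (N₁ * M))ᵀ := (transpose_mul _ _).symm
    _ = (N₂ * (M * N₁ * M))ᵀ := by simp only [Matrix.mul_assoc]
    _ = (N₂ * M)ᵀ := by rw [m1]
    _ = N₂ * M := t2
  calc N₁ = N₁ * M * N₁ := r1.symm
  _ = N₂ * M * N₁ := by rw [e2]
  _ = N₂ * (M * N₁) := by rw [Matrix.mul_assoc]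
  _ = N₂ * (M * N₂) := by rw [e1]
  _ = N₂ := by rw [← Matrix.mul_assoc, r2]

lemma mp_conj {p q : Type*} [Fintype p] [Fintype q] [DecidableEq q] (W : Matrix p q ℝ)
    (hW : Wᵀ * W = 1) (M N : Matrix q q ℝ) (h : IsMoorePenrose M N) :
    IsMoorePenrose (W * M * Wᵀ) (W * N * Wᵀ) := by
  obtain ⟨h1, h2, h3, h4⟩ := h
  have hmul : ∀ (Y Z : Matrix q q ℝ), (W * Y * Wᵀ) * (W * Z * Wᵀ) = W * (Y * Z) * Wᵀ := by
    intro Y Z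
    simp only [Matrix.mul_assoc]
    rw [← Matrix.mul_assoc Wᵀ W (Z * Wᵀ), hW, Matrix.one_mul]
  refine ⟨?_, ?_, ?_, ?_⟩
  · rw [hmul, hmul, h1]
  · rw [hmul, hmul, h2]
  · rw [hmul, transpose_mul, transpose_mul, transpose_transpose, h3]
    simp only [Matrix.mul_assoc]
  · rw [hmul, transpose_mul, transpose_mul, transpose_transpose, h4]
    simp only [Matrix.mul_assoc]

lemma mp_block {r k : Type*} [Fintype r] [Fintype k] [DecidableEq r] [DecidableEq k]
    (a : Matrix r r ℝ) (b : Matrix r k ℝ) (c cp P : Matrix k k ℝ) (Bi : Matrix r r ℝ)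
    (ha : aᵀ = a) (hc : cᵀ = c) (hcp : cpᵀ = cp) (hP : c * cp = P) (hPsym : Pᵀ = P)
    (hbP : b * P = b) (hcpP : cp * P = cp) (hPc : P * c = c)
    (hB1 : (a - b * cp * bᵀ) * Bi = 1) (hB2 : Bi * (a - b * cp * bᵀ) = 1) (hBi : Biᵀ = Bi) :
    IsMoorePenrose (fromBlocks a b bᵀ c)
      (fromBlocks Bi (-(Bi * b * cp)) (-(cp * bᵀ * Bi)) (cp + cp * bᵀ * Bi * b * cp)) := by
  have hPbt : P * bᵀ = bᵀ := by
    rw [← hPsym]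
    calc Pᵀ * bᵀ = (b * P)ᵀ := (transpose_mul _ _).symm
    _ = bᵀ := by rw [hbP]
  have hPcp : P * cp = cp := by
    rw [← hPsym, ← hcp]
    calc Pᵀ * cpᵀ = (cp * P)ᵀ := (transpose_mul _ _).symm
    _ = cpᵀ := by rw [hcpP]
  have h1' : a * Bi = 1 + b * cp * bᵀ * Bi := by
    rw [Matrix.sub_mul] at hB1
    exact sub_eq_iff_eq_add.mp hB1
  set M := fromBlocks a b bᵀ c with hM
  set N := fromBlocks Bi (-(Bi * b * cp)) (-(cp * bᵀ * Bi)) (cp + cp * bᵀ * Bi * b * cp) with hN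
  have e11 : a * Bi + b * -(cp * bᵀ * Bi) = 1 := by
    rw [Matrix.mul_neg, ← sub_eq_add_neg, ← Matrix.mul_assoc, ← Matrix.mul_assoc,
      ← Matrix.sub_mul, hB1]
  have e12 : a * -(Bi * b * cp) + b * (cp + cp * bᵀ * Bi * b * cp) = 0 := by
    simp only [Matrix.mul_neg, Matrix.mul_add, ← Matrix.mul_assoc]
    rw [h1', Matrix.add_mul, Matrix.add_mul, Matrix.one_mul]
    abel
  have e21 : bᵀ * Bi + c * -(cp * bᵀ * Bi) = 0 := by
    simp only [Matrix.mul_neg, ← Matrix.mul_assoc]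
    rw [hP, hPbt]
    abel
  have e22 : bᵀ * -(Bi * b * cp) + c * (cp + cp * bᵀ * Bi * b * cp) = P := by
    simp only [Matrix.mul_neg, Matrix.mul_add, ← Matrix.mul_assoc]
    rw [hP, hPbt]
    abel
  have hMN : M * N = fromBlocks 1 0 0 P := by
    rw [hM, hN, fromBlocks_multiply, e11, e12, e21, e22]
  have hMsym : Mᵀ = M := by
    rw [hM, fromBlocks_transpose, ha, hc, transpose_transpose]
  have hNsym : Nᵀ = N := by
    rw [hN, fromBlocks_transpose]
    simp only [transpose_neg, transpose_mul, transpose_add, transpose_transpose, hBi, hcp,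
      Matrix.mul_assoc]
  have hNM : N * M = fromBlocks 1 0 0 P := by
    calc N * M = (Mᵀ * Nᵀ)ᵀ := by rw [← transpose_mul, transpose_transpose]
    _ = (M * N)ᵀ := by rw [hMsym, hNsym]
    _ = fromBlocks 1 0 0 P := by
      rw [hMN, fromBlocks_transpose, hPsym]
      simp
  refine ⟨?_, ?_, ?_, ?_⟩
  · rw [hMN, hM, fromBlocks_multiply]
    simp only [Matrix.one_mul, Matrix.zero_mul, Matrix.mul_zero, add_zero, zero_add, hPbt, hPc]
  · rw [hNM, hN, fromBlocks_multiply]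
    simp only [Matrix.one_mul, Matrix.zero_mul, Matrix.mul_zero, add_zero, zero_add,
      Matrix.mul_neg, Matrix.mul_add, ← Matrix.mul_assoc, hPcp, neg_zero]
  · rw [hMN, fromBlocks_transpose, hPsym]
    simp
  · rw [hNM, fromBlocks_transpose, hPsym]
    simp

/-- With `D = U Λ Vᵀ` (compact SVD), `A = ν X*X + DᵀD` and
`B = Λ² + ν Vᵀ X*(I − U₁U₁ᵀ)X V`, one has `D A⁺ Dᵀ = U Λ B⁻¹ Λ Uᵀ`, hence
`Σ = (I − D A⁺ Dᵀ)/ν = (I − U Λ B⁻¹ Λ Uᵀ)/ν`. -/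
theorem DAdagDT_eq {n m p r k r' : ℕ}
    (X : Matrix (Fin n) (Fin p) ℝ) (D : Matrix (Fin m) (Fin p) ℝ) (ν : ℝ) (hν : 0 < ν)
    (U : Matrix (Fin m) (Fin r) ℝ) (Λ : Matrix (Fin r) (Fin r) ℝ)
    (V : Matrix (Fin p) (Fin r) ℝ) (Vt : Matrix (Fin p) (Fin k) ℝ)
    (U₁ : Matrix (Fin n) (Fin r') ℝ) (Λ₁ : Matrix (Fin r') (Fin r') ℝ)
    (V₁ : Matrix (Fin k) (Fin r') ℝ)
    (hD : D = U * Λ * Vᵀ) (hU : Uᵀ * U = 1) (hΛ : Λ.PosDef) (hΛsym : Λᵀ = Λ)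
    (hV : Vᵀ * V = 1) (hVt : Vtᵀ * Vt = 1) (hVVt : Vᵀ * Vt = 0)
    (hVfull : V * Vᵀ + Vt * Vtᵀ = 1)
    (hX : X * Vt = Real.sqrt n • (U₁ * Λ₁ * V₁ᵀ))
    (hU₁ : U₁ᵀ * U₁ = 1) (hΛ₁ : Λ₁.PosDef) (hΛ₁sym : Λ₁ᵀ = Λ₁) (hV₁ : V₁ᵀ * V₁ = 1)
    (Xstar : Matrix (Fin p) (Fin n) ℝ) (hXstar : Xstar = ((n : ℝ))⁻¹ • Xᵀ)
    (A : Matrix (Fin p) (Fin p) ℝ) (hA : A = ν • (Xstar * X) + Dᵀ * D)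
    (Aplus : Matrix (Fin p) (Fin p) ℝ) (hAplus : IsMoorePenrose A Aplus)
    (B : Matrix (Fin r) (Fin r) ℝ)
    (hB : B = Λ * Λ + ν • (Vᵀ * Xstar * ((1 : Matrix (Fin n) (Fin n) ℝ) - U₁ * U₁ᵀ) * X * V)) :
    D * Aplus * Dᵀ = U * Λ * B⁻¹ * Λ * Uᵀ ∧
      ν⁻¹ • ((1 : Matrix (Fin m) (Fin m) ℝ) - D * Aplus * Dᵀ) =
        ν⁻¹ • ((1 : Matrix (Fin m) (Fin m) ℝ) - U * Λ * B⁻¹ * Λ * Uᵀ) := by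
  classical
  -- collapse helpers
  have hVtV : Vtᵀ * V = 0 := by
    have := congrArg transpose hVVt
    simpa [transpose_mul] using this
  have hVV' : ∀ {q : Type} (Z : Matrix (Fin r) q ℝ), Vᵀ * (V * Z) = Z := fun Z => by
    rw [← Matrix.mul_assoc, hV, Matrix.one_mul]
  have hVtVt' : ∀ {q : Type} (Z : Matrix (Fin k) q ℝ), Vtᵀ * (Vt * Z) = Z := fun Z => by
    rw [← Matrix.mul_assoc, hVt, Matrix.one_mul]
  have hVVt' : ∀ {q : Type} (Z : Matrix (Fin k) q ℝ), Vᵀ * (Vt * Z) = 0 := fun Z => by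
    rw [← Matrix.mul_assoc, hVVt, Matrix.zero_mul]
  have hVtV' : ∀ {q : Type} (Z : Matrix (Fin r) q ℝ), Vtᵀ * (V * Z) = 0 := fun Z => by
    rw [← Matrix.mul_assoc, hVtV, Matrix.zero_mul]
  have hU₁' : ∀ {q : Type} (Z : Matrix (Fin r') q ℝ), U₁ᵀ * (U₁ * Z) = Z := fun Z => by
    rw [← Matrix.mul_assoc, hU₁, Matrix.one_mul]
  have hV₁' : ∀ {q : Type} (Z : Matrix (Fin r') q ℝ), V₁ᵀ * (V₁ * Z) = Z := fun Z => by
    rw [← Matrix.mul_assoc, hV₁, Matrix.one_mul]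
  have hSsym : (Xstar * X)ᵀ = Xstar * X := by
    rw [hXstar]
    simp [transpose_mul, transpose_smul, Matrix.smul_mul, Matrix.mul_smul]
  have hS2 : ∀ {q : Type} (Z : Matrix (Fin p) q ℝ), Xᵀ * (Xstarᵀ * Z) = Xstar * (X * Z) :=
    fun Z => by rw [← Matrix.mul_assoc, ← transpose_mul, hSsym, Matrix.mul_assoc]
  set a := Λ * Λ + ν • (Vᵀ * (Xstar * X) * V) with ha_def
  set b := ν • (Vᵀ * (Xstar * X) * Vt) with hb_def
  set c := ν • (Vtᵀ * (Xstar * X) * Vt) with hc_def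
  have ha : aᵀ = a := by
    rw [ha_def]
    simp only [transpose_add, transpose_smul, transpose_mul, transpose_transpose, hΛsym, hSsym, hS2,
      Matrix.mul_assoc]
  have hbT : bᵀ = ν • (Vtᵀ * (Xstar * X) * V) := by
    rw [hb_def]
    simp only [transpose_smul, transpose_mul, transpose_transpose, hSsym, hS2, Matrix.mul_assoc]
  have hc : cᵀ = c := by
    rw [hc_def]
    simp only [transpose_smul, transpose_mul, transpose_transpose, hSsym, hS2, Matrix.mul_assoc]
  set W := fromCols V Vt with hW_def
  have hWWT : W * Wᵀ = 1 := by
    rw [hW_def, transpose_fromCols, fromCols_mul_fromRows, hVfull]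
  have hWTW : Wᵀ * W = 1 := by
    rw [hW_def, transpose_fromCols, fromRows_mul_fromCols, hV, hVt, hVVt, hVtV,
      fromBlocks_one]
  have hDtD : Dᵀ * D = V * (Λ * Λ) * Vᵀ := by
    rw [hD]
    simp only [transpose_mul, transpose_transpose, Matrix.mul_assoc]
    rw [← Matrix.mul_assoc Uᵀ U, hU, Matrix.one_mul, hΛsym]
  -- block decomposition of A
  have h11 : Vᵀ * A * V = a := by
    rw [hA, hDtD, ha_def]
    simp only [Matrix.mul_add, Matrix.add_mul, Matrix.smul_mul, Matrix.mul_smul,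
      Matrix.mul_assoc, hVV', hVVt', hV, Matrix.mul_one]
    abel
  have h12 : Vᵀ * A * Vt = b := by
    rw [hA, hDtD, hb_def]
    simp only [Matrix.mul_add, Matrix.add_mul, Matrix.smul_mul, Matrix.mul_smul,
      Matrix.mul_assoc, hVV', hVVt, Matrix.mul_zero, add_zero]
  have h21 : Vtᵀ * A * V = bᵀ := by
    rw [hA, hDtD, hbT]
    simp only [Matrix.mul_add, Matrix.add_mul, Matrix.smul_mul, Matrix.mul_smul,
      Matrix.mul_assoc, hVtV', Matrix.mul_zero, add_zero]
  have h22 : Vtᵀ * A * Vt = c := by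
    rw [hA, hDtD, hc_def]
    simp only [Matrix.mul_add, Matrix.add_mul, Matrix.smul_mul, Matrix.mul_smul,
      Matrix.mul_assoc, hVtV', Matrix.mul_zero, add_zero]
  have hblock : A = W * (fromBlocks a b bᵀ c) * Wᵀ := by
    have h1 : Wᵀ * A * W = fromBlocks a b bᵀ c := by
      rw [hW_def, transpose_fromCols, fromRows_mul, fromRows_mul_fromCols,
        h11, h12, h21, h22]
    have h2 : W * (Wᵀ * A * W) * Wᵀ = A := by
      calc W * (Wᵀ * A * W) * Wᵀ = (W * Wᵀ) * (A * (W * Wᵀ)) := by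
            simp only [Matrix.mul_assoc]
      _ = A := by rw [hWWT, Matrix.one_mul, Matrix.mul_one]
    rw [← h1, h2]
  -- B is positive definite
  set Q := (1 : Matrix (Fin n) (Fin n) ℝ) - U₁ * U₁ᵀ with hQ_def
  have hQT : Qᵀ = Q := by
    rw [hQ_def]
    simp [transpose_sub, transpose_mul, transpose_transpose]
  have hQQ : Q * Q = Q := by
    rw [hQ_def]
    simp only [Matrix.mul_sub, Matrix.sub_mul, Matrix.mul_one, Matrix.one_mul,
      Matrix.mul_assoc, hU₁']
    abel
  have hΛΛ : (Λ * Λ).PosDef := by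
    refine Matrix.posDef_iff_dotProduct_mulVec.mpr ⟨?_, fun x hx => ?_⟩
    · show (Λ * Λ)ᴴ = Λ * Λ
      rw [conjTranspose_eq_transpose_of_trivial, transpose_mul, hΛsym]
    · have hinj : Function.Injective (Λ.mulVec) :=
        Matrix.mulVec_injective_iff_isUnit.mpr hΛ.isUnit
      have hΛx : Λ *ᵥ x ≠ 0 := fun h => hx (hinj (by simpa using h))
      have : 0 < star (Λ *ᵥ x) ⬝ᵥ (Λ *ᵥ x) := by
        rw [dotProduct_star_self_pos_iff]
        exact hΛx
      calc (0:ℝ) < star (Λ *ᵥ x) ⬝ᵥ (Λ *ᵥ x) := this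
      _ = star x ⬝ᵥ ((Λ * Λ) *ᵥ x) := by
        simp only [star_trivial, ← Matrix.mulVec_mulVec]
        rw [dotProduct_mulVec, ← Matrix.mulVec_transpose, hΛsym]
        exact dotProduct_comm _ _
  have hn0 : (0:ℝ) ≤ ν * ((n:ℝ))⁻¹ := by positivity
  have hpsd : (ν • (Vᵀ * Xstar * Q * X * V)).PosSemidef := by
    have key : ν • (Vᵀ * Xstar * Q * X * V) =
        (Real.sqrt (ν * ((n:ℝ))⁻¹) • (Q * (X * V)))ᵀ *
          (Real.sqrt (ν * ((n:ℝ))⁻¹) • (Q * (X * V))) := by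
      rw [hXstar]
      simp only [transpose_smul, transpose_mul, Matrix.smul_mul, Matrix.mul_smul, smul_smul,
        Matrix.mul_assoc, hQT]
      rw [Real.mul_self_sqrt hn0]
      rw [← Matrix.mul_assoc Q Q, hQQ]
    rw [key]
    have := Matrix.posSemidef_conjTranspose_mul_self
      (Real.sqrt (ν * ((n:ℝ))⁻¹) • (Q * (X * V)))
    rwa [conjTranspose_eq_transpose_of_trivial] at this
  have hBpd : B.PosDef := by
    rw [hB]
    exact hΛΛ.add_posSemidef hpsd
  have hdet : IsUnit B.det := hBpd.det_pos.ne'.isUnit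
  have hB1 : B * B⁻¹ = 1 := Matrix.mul_nonsing_inv _ hdet
  have hB2 : B⁻¹ * B = 1 := Matrix.nonsing_inv_mul _ hdet
  have hBsym : Bᵀ = B := by
    rw [← conjTranspose_eq_transpose_of_trivial]
    exact hBpd.1
  have hBi : (B⁻¹)ᵀ = B⁻¹ := by rw [Matrix.transpose_nonsing_inv, hBsym]
  -- cp and P
  obtain ⟨cp, P, hcpT, hPdef, hPsym, hbP, hcpP, hPc, hBeq⟩ :
      ∃ cp P : Matrix (Fin k) (Fin k) ℝ, cpᵀ = cp ∧ c * cp = P ∧ Pᵀ = P ∧ b * P = b ∧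
        cp * P = cp ∧ P * c = c ∧ a - b * cp * bᵀ = B := by
    rcases eq_or_ne ((n:ℝ)) 0 with hn | hn
    · have hXs0 : Xstar = 0 := by rw [hXstar, hn]; simp
      have hb0 : b = 0 := by rw [hb_def, hXs0]; simp
      have hc0 : c = 0 := by rw [hc_def, hXs0]; simp
      refine ⟨0, 0, by simp, by simp, by simp, by simp [hb0], by simp, by simp [hc0], ?_⟩
      rw [hB, ha_def, hXs0]
      simp
    · have hsq : Real.sqrt n * Real.sqrt n = (n:ℝ) :=
        Real.mul_self_sqrt (Nat.cast_nonneg n)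
      have hL1det : IsUnit Λ₁.det := hΛ₁.det_pos.ne'.isUnit
      have hL1 : Λ₁ * Λ₁⁻¹ = 1 := Matrix.mul_nonsing_inv _ hL1det
      have hL2 : Λ₁⁻¹ * Λ₁ = 1 := Matrix.nonsing_inv_mul _ hL1det
      have hL1T : (Λ₁⁻¹)ᵀ = Λ₁⁻¹ := by rw [Matrix.transpose_nonsing_inv, hΛ₁sym]
      have hL1' : ∀ {q : Type} (Z : Matrix (Fin r') q ℝ), Λ₁ * (Λ₁⁻¹ * Z) = Z := fun Z => by
        rw [← Matrix.mul_assoc, hL1, Matrix.one_mul]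
      have hL2' : ∀ {q : Type} (Z : Matrix (Fin r') q ℝ), Λ₁⁻¹ * (Λ₁ * Z) = Z := fun Z => by
        rw [← Matrix.mul_assoc, hL2, Matrix.one_mul]
      have hXsT : Xstarᵀ = ((n:ℝ))⁻¹ • X := by rw [hXstar]; simp
      -- c in terms of V₁
      have hcv : c = ν • (V₁ * (Λ₁ * (Λ₁ * V₁ᵀ))) := by
        rw [hc_def]
        simp only [Matrix.mul_assoc]
        rw [hXstar]
        simp only [Matrix.smul_mul, Matrix.mul_smul, smul_smul]
        rw [hX]
        simp only [Matrix.mul_smul, smul_smul]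
        have h1 : Vtᵀ * (Xᵀ * (U₁ * Λ₁ * V₁ᵀ)) = (X * Vt)ᵀ * (U₁ * Λ₁ * V₁ᵀ) := by
          simp only [transpose_mul, Matrix.mul_assoc]
        rw [h1, hX]
        simp only [Matrix.smul_mul, smul_smul, transpose_smul, transpose_mul,
          transpose_transpose, Matrix.mul_assoc, hU₁', hΛ₁sym]
        congr 1
        rw [mul_assoc, hsq, mul_assoc, inv_mul_cancel₀ hn, mul_one]
      have hb2 : b = (ν * Real.sqrt n) • (Vᵀ * (Xstar * (U₁ * (Λ₁ * V₁ᵀ)))) := by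
        rw [hb_def]
        simp only [Matrix.mul_assoc]
        rw [hX]
        simp only [Matrix.mul_smul, smul_smul, Matrix.mul_assoc]
      refine ⟨ν⁻¹ • (V₁ * ((Λ₁⁻¹ * Λ₁⁻¹) * V₁ᵀ)), V₁ * V₁ᵀ, ?_, ?_, ?_, ?_, ?_, ?_, ?_⟩
      · simp only [transpose_smul, transpose_mul, transpose_transpose, hL1T, Matrix.mul_assoc]
      · rw [hcv]
        simp only [Matrix.smul_mul, Matrix.mul_smul, smul_smul, Matrix.mul_assoc, hV₁',
          hL1', hL2']
        rw [show ν⁻¹ * ν = 1 from inv_mul_cancel₀ hν.ne', one_smul]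
      · simp only [transpose_mul, transpose_transpose]
      · rw [hb2]
        simp only [Matrix.smul_mul, Matrix.mul_assoc, hV₁']
      · simp only [Matrix.smul_mul, Matrix.mul_assoc, hV₁']
      · rw [hcv]
        simp only [Matrix.mul_smul, Matrix.mul_assoc, hV₁']
      · -- the Schur complement identity
        have hbcb : b * (ν⁻¹ • (V₁ * ((Λ₁⁻¹ * Λ₁⁻¹) * V₁ᵀ))) * bᵀ =
            ν • (Vᵀ * (Xstar * (U₁ * (U₁ᵀ * (X * V))))) := by
          rw [hb2]
          simp only [transpose_smul, transpose_mul, transpose_transpose, hXsT, hΛ₁sym,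
            Matrix.smul_mul, Matrix.mul_smul, smul_smul, Matrix.mul_assoc, hV₁', hL1', hL2']
          congr 1
          calc ν * Real.sqrt n * ((n:ℝ))⁻¹ * (ν⁻¹ * (ν * Real.sqrt n))
              = (ν * (ν⁻¹ * ν)) * ((Real.sqrt n * Real.sqrt n) * ((n:ℝ))⁻¹) := by ring
          _ = ν := by rw [inv_mul_cancel₀ hν.ne', hsq, mul_inv_cancel₀ hn, mul_one, mul_one]
        rw [hB, hbcb, ha_def]
        simp only [hQ_def, Matrix.mul_sub, Matrix.sub_mul, Matrix.mul_one, Matrix.one_mul,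
          smul_sub, Matrix.mul_assoc]
        abel
  -- the explicit pseudoinverse
  set N := fromBlocks B⁻¹ (-(B⁻¹ * b * cp)) (-(cp * bᵀ * B⁻¹)) (cp + cp * bᵀ * B⁻¹ * b * cp)
    with hN_def
  have hmpN : IsMoorePenrose A (W * N * Wᵀ) := by
    rw [hblock]
    exact mp_conj W hWTW _ _ (mp_block a b c cp P B⁻¹ ha hc hcpT hPdef hPsym hbP hcpP hPc
      (by rw [hBeq]; exact hB1) (by rw [hBeq]; exact hB2) hBi)
  have hApl : Aplus = W * N * Wᵀ := mp_unique hAplus hmpN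
  -- extraction of the top-left block
  have hVW : Vᵀ * W = fromCols (1 : Matrix (Fin r) (Fin r) ℝ) 0 := by
    rw [hW_def, Matrix.mul_fromCols, hV, hVVt]
  have hWV : Wᵀ * V = fromRows (1 : Matrix (Fin r) (Fin r) ℝ) 0 := by
    rw [hW_def, transpose_fromCols, fromRows_mul, hV, hVtV]
  have hmid : Vᵀ * (W * N * Wᵀ) * V = B⁻¹ := by
    calc Vᵀ * (W * N * Wᵀ) * V = ((Vᵀ * W) * N) * (Wᵀ * V) := by
          simp only [Matrix.mul_assoc]
    _ = (fromCols (1 : Matrix (Fin r) (Fin r) ℝ) (0 : Matrix (Fin r) (Fin k) ℝ) * N) *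
          fromRows (1 : Matrix (Fin r) (Fin r) ℝ) (0 : Matrix (Fin k) (Fin r) ℝ) := by
          rw [hVW, hWV]
    _ = B⁻¹ := by
        rw [hN_def, fromCols_mul_fromBlocks, fromCols_mul_fromRows]
        simp
  have hDT : Dᵀ = V * Λ * Uᵀ := by
    rw [hD]
    simp only [transpose_mul, transpose_transpose, hΛsym, Matrix.mul_assoc]
  have goal1 : D * Aplus * Dᵀ = U * Λ * B⁻¹ * Λ * Uᵀ := by
    rw [hApl, hDT, hD]
    calc (U * Λ * Vᵀ) * (W * N * Wᵀ) * (V * Λ * Uᵀ)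
        = U * Λ * (Vᵀ * (W * N * Wᵀ) * V) * Λ * Uᵀ := by simp only [Matrix.mul_assoc]
    _ = U * Λ * B⁻¹ * Λ * Uᵀ := by rw [hmid]
  exact ⟨goal1, by rw [goal1]⟩
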